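/- If A ⊆ S² is recursively enumerable and satisfies condition (5), then for every recursively enumerable A' ⊆ A there is a non-overlapping recursively enumerable A'' ⊆ A such that ∪_{x∈A''} Δ(x) = ∪_{x∈A'} Δ(x). -/

import Mathlib

open MeasureTheory Filter Set
open scoped ENNReal NNReal

namespace AlgRand

set_option maxHeartbeats 1600000

/-- `S` : finite binary strings. -/
abbrev S : Type := List Bool

/-- `Seq` : infinite binary sequences (the space Ω). -/
abbrev Seq : Type := ℕ → Bool

/-- A finite string is a prefix of an infinite sequence. -/
def PrefixSeq (x : S) (ω : Seq) : Prop := ∀ i : Fin x.length, x.get i = ω i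

/-- The first `n` bits of an infinite sequence. -/
def seqTake (ω : Seq) (n : ℕ) : S := List.ofFn fun i : Fin n => ω i

/-- Cylinder set Δ(x) ⊆ Ω. -/
def cyl (x : S) : Set Seq := {ω | PrefixSeq x ω}

/-- Product cylinder Δ(x,y) ⊆ Ω². -/
def cyl2 (xy : S × S) : Set (Seq × Seq) := cyl xy.1 ×ˢ cyl xy.2

/-- Prefix (partial order) on S². -/
def Pre2 (a b : S × S) : Prop := a.1 <+: b.1 ∧ a.2 <+: b.2

/-- A pair of strings is a (strict) prefix of a pair of sequences. -/
def Pre2Seq (a : S × S) (ω : Seq × Seq) : Prop := PrefixSeq a.1 ω.1 ∧ PrefixSeq a.2 ω.2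

/-- Recursively enumerable subset of a primcodable type. -/
def RESet {β : Type} [Primcodable β] (A : Set β) : Prop :=
  ∃ f : ℕ → Option β, Computable f ∧ A = {a | ∃ n, f n = some a}

/-- A computable probability measure on Ω. -/
def ComputableProb (P : Measure Seq) : Prop :=
  IsProbabilityMeasure P ∧
    ∃ p : S × ℕ → ℚ, Computable p ∧
      ∀ (x : S) (k : ℕ), 0 < k → |(P (cyl x)).toReal - (p (x, k) : ℝ)| < 1 / k

/-- A computable probability measure on Ω². -/
def ComputableProb2 (P : Measure (Seq × Seq)) : Prop :=
  IsProbabilityMeasure P ∧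
    ∃ p : (S × S) × ℕ → ℚ, Computable p ∧
      ∀ (xy : S × S) (k : ℕ), 0 < k → |(P (cyl2 xy)).toReal - (p (xy, k) : ℝ)| < 1 / k

/-- Ũ_n, the open set covered by the n-th level of a test. -/
def testUnion {α β : Type} (C : β → Set α) (U : Set (ℕ × β)) (n : ℕ) : Set α :=
  ⋃ x ∈ {x | (n, x) ∈ U}, C x

/-- Martin-Löf test w.r.t. a measure, generic in the cylinder function `C`. -/
def IsMLTest {α β : Type} [MeasurableSpace α] [Primcodable β]
    (C : β → Set α) (P : Measure α) (U : Set (ℕ × β)) : Prop :=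
  RESet U ∧ (∀ n, testUnion C U (n + 1) ⊆ testUnion C U n) ∧
    ∀ n, P (testUnion C U n) < (2⁻¹ : ℝ≥0∞) ^ n

/-- Martin-Löf randomness: ω avoids the limit of every test. -/
def MLRandom {α β : Type} [MeasurableSpace α] [Primcodable β]
    (C : β → Set α) (P : Measure α) (ω : α) : Prop :=
  ∀ U, IsMLTest C P U → ω ∉ ⋂ n, testUnion C U n

/-- ω ∈ R^P, for P on Ω. -/
abbrev Random1 (P : Measure Seq) (ω : Seq) : Prop := MLRandom cyl P ω

/-- ω ∈ R^P, for P on Ω². -/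
abbrev Random2 (P : Measure (Seq × Seq)) (ω : Seq × Seq) : Prop := MLRandom cyl2 P ω

/-- Marginal distribution P_X on the first coordinate. -/
noncomputable def margX (P : Measure (Seq × Seq)) : Measure Seq := P.map Prod.fst

/-- Marginal distribution P_Y on the second coordinate. -/
noncomputable def margY (P : Measure (Seq × Seq)) : Measure Seq := P.map Prod.snd

/-- Conditional probability P(x|y) = P(x,y)/P_Y(y), with value 0 when P_Y(y) = 0. -/
noncomputable def condP (P : Measure (Seq × Seq)) (x y : S) : ℝ :=
  (P (cyl2 (x, y))).toReal / (P (Set.univ ×ˢ cyl y)).toReal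

/-- P(x|yinf) := lim_{y → yinf} P(x|y) along prefixes of yinf (junk value if no limit). -/
noncomputable def condPLim (P : Measure (Seq × Seq)) (x : S) (yinf : Seq) : ℝ :=
  limUnder atTop fun m => condP P x (seqTake yinf m)

/-- Conditional probability P(y|x) = P(x,y)/P_X(x), with value 0 when P_X(x) = 0. -/
noncomputable def condX (P : Measure (Seq × Seq)) (y x : S) : ℝ :=
  (P (cyl2 (x, y))).toReal / (P (cyl x ×ˢ Set.univ)).toReal

/-- P(y|xinf) := lim_{x → xinf} P(y|x) along prefixes of xinf (junk value if no limit). -/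
noncomputable def condXLim (P : Measure (Seq × Seq)) (y : S) (xinf : Seq) : ℝ :=
  limUnder atTop fun m => condX P y (seqTake xinf m)

/-- The set S ∪ Ω of finite or infinite binary sequences. -/
inductive SW : Type where
  | fin : S → SW
  | inf : Seq → SW

/-- Prefix order ⊑ on S ∪ Ω. -/
def SW.le : SW → SW → Prop
  | .fin x, .fin y => x <+: y
  | .fin x, .inf ω => PrefixSeq x ω
  | .inf ω, .inf ω' => ω = ω'
  | .inf _, .fin _ => False

/-- (S ∪ Ω)². -/
abbrev SW2 : Type := SW × SW

/-- Componentwise prefix order ⊑ on (S ∪ Ω)². -/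
def SW2.le (a b : SW2) : Prop := SW.le a.1 b.1 ∧ SW.le a.2 b.2

/-- Length |x| ∈ ℕ∞ of an element of S ∪ Ω. -/
def SW.len : SW → ℕ∞
  | .fin x => (x.length : ℕ∞)
  | .inf _ => ⊤

/-- |p| = |p₁| + |p₂| for p ∈ (S ∪ Ω)². -/
def SW2.len (a : SW2) : ℕ∞ := SW.len a.1 + SW.len a.2

/-- Δ(x) for x ∈ S ∪ Ω. -/
def SW.cylW : SW → Set Seq
  | .fin x => cyl x
  | .inf ω => {ω}

/-- Δ(x,y) for (x,y) ∈ (S ∪ Ω)². -/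
def SW2.cylW (a : SW2) : Set (Seq × Seq) := SW.cylW a.1 ×ˢ SW.cylW a.2

/-- Embedding S → S ∪ Ω. -/
def emb1 (x : S) : SW := SW.fin x

/-- Embedding S² → (S ∪ Ω)². -/
def emb2 (p : S × S) : SW2 := (SW.fin p.1, SW.fin p.2)

/-- Embedding Ω² → (S ∪ Ω)². -/
def inf2 (ω : Seq × Seq) : SW2 := (SW.inf ω.1, SW.inf ω.2)

/-- Least upper bound with respect to a relation. -/
def IsSupRel {V : Type} (le : V → V → Prop) (A : Set V) (s : V) : Prop :=
  (∀ a ∈ A, le a s) ∧ ∀ b, (∀ a ∈ A, le a b) → le s b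

/-- `f` is a computable monotone function defined by an r.e. set `F` satisfying
condition (3) of the paper:  (λ,λ) ∈ F_p and ⋁_{p'⊑p} F_{p'} exists for every p,
and f(q) = ⋁ {x : ∃ p' ⊑ q, (p',x) ∈ F}. -/
def CompMono {D E : Type} {W V : Type} [Primcodable D] [Primcodable E]
    (embD : D → W) (leW : W → W → Prop) (embE : E → V) (leV : V → V → Prop)
    (eps : E) (f : W → V) : Prop :=
  ∃ F : Set (D × E), RESet F ∧
    (∀ p : D, (p, eps) ∈ F ∧
        ∃ s, IsSupRel leV (embE '' {x | ∃ p' : D, leW (embD p') (embD p) ∧ (p', x) ∈ F}) s) ∧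
    ∀ q : W, IsSupRel leV (embE '' {x | ∃ p' : D, leW (embD p') q ∧ (p', x) ∈ F}) (f q)

/-- Computable monotone function (S ∪ Ω)² → (S ∪ Ω)². -/
def CompMono22 (f : SW2 → SW2) : Prop := CompMono emb2 SW2.le emb2 SW2.le (([], []) : S × S) f

/-- Computable monotone function S ∪ Ω → (S ∪ Ω)². -/
def CompMono12 (g : SW → SW2) : Prop := CompMono emb1 SW.le emb2 SW2.le (([], []) : S × S) g

/-- Computable monotone function (S ∪ Ω)² → S ∪ Ω. -/
def CompMono21 (e : SW2 → SW) : Prop := CompMono emb2 SW2.le emb1 SW.le ([] : S) e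

/-- Computable monotone function S ∪ Ω → S ∪ Ω. -/
def CompMono11 (ρ : SW → SW) : Prop := CompMono emb1 SW.le emb1 SW.le ([] : S) ρ

/-- Km²_f(x) := min{|p₁|+|p₂| : x ⊑ f(p₁,p₂)} ∈ ℕ∞. -/
noncomputable def Km2 (f : SW2 → SW2) (x : SW2) : ℕ∞ :=
  ⨅ (p : SW2) (_ : SW2.le x (f p)), SW2.len p

/-- Km_f(x) := min{|p| : x ⊑ f(p,λ)} ∈ ℕ∞. -/
noncomputable def Km1 (f : SW2 → SW2) (x : SW2) : ℕ∞ :=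
  ⨅ (p : SW) (_ : SW2.le x (f (p, SW.fin []))), SW.len p

/-- Km(x|y) := min{|p| : (x,λ) ⊑ u(p,y)} ∈ ℕ∞. -/
noncomputable def KmCond (u : SW2 → SW2) (x y : SW) : ℕ∞ :=
  ⨅ (p : SW) (_ : SW2.le (x, SW.fin []) (u (p, y))), SW.len p

/-- Km_g(x) := min{|p| : x ⊑ g(p)} for g : S ∪ Ω → (S ∪ Ω)². -/
noncomputable def KmOf12 (g : SW → SW2) (x : SW2) : ℕ∞ :=
  ⨅ (p : SW) (_ : SW2.le x (g p)), SW.len p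

/-- Optimality of a computable monotone function on (S ∪ Ω)². -/
def Optimal (u : SW2 → SW2) : Prop :=
  CompMono22 u ∧
    ∀ f : SW2 → SW2, CompMono22 f → ∃ c : ℕ, ∀ x : SW2, Km2 u x ≤ Km2 f x + (c : ℕ∞)

/-- 2^{-n} for n ∈ ℕ∞ (with 2^{-∞} = 0), as an extended nonnegative real. -/
noncomputable def tpow (n : ℕ∞) : ℝ≥0∞ := if n = ⊤ then 0 else (2⁻¹ : ℝ≥0∞) ^ n.toNat

/-- Non-overlapping subset of (S ∪ Ω)². -/
def NonOverlapW (A : Set SW2) : Prop := A.Pairwise fun a b => SW2.cylW a ∩ SW2.cylW b = ∅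

/-- Non-overlapping subset of S². -/
def NonOverlapF (A : Set (S × S)) : Prop := A.Pairwise fun a b => cyl2 a ∩ cyl2 b = ∅

/-- Condition (4): any two members of A are comparable or have disjoint cylinders. -/
def Cond4 (A : Set (S × S)) : Prop :=
  ∀ a ∈ A, ∀ b ∈ A, Pre2 a b ∨ Pre2 b a ∨ cyl2 a ∩ cyl2 b = ∅

/-- Condition (5): relative complements of cylinders are non-overlapping unions within A. -/
def Cond5 (A : Set (S × S)) : Prop :=
  ∀ a ∈ A, ∀ b ∈ A, ∃ α ⊆ A, NonOverlapF α ∧ cyl2 a ∩ (cyl2 b)ᶜ = ⋃ z ∈ α, cyl2 z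

/-- A(xinf) := {x ∈ A | x ⊏ xinf}. -/
def Asec (A : Set (S × S)) (ω : Seq × Seq) : Set (S × S) := {a ∈ A | Pre2Seq a ω}

/-- sup_{x ∈ A} (−log P(x) − K(x)) < ∞. -/
def KmBound (P : Measure (Seq × Seq)) (K : S × S → ℕ∞) (A : Set (S × S)) : Prop :=
  ∃ c : ℝ, ∀ x ∈ A, ∀ k : ℕ, K x = (k : ℕ∞) →
    0 < P (cyl2 x) ∧ -Real.logb 2 ((P (cyl2 x)).toReal) ≤ (k : ℝ) + c

/-- sup_{x ∈ A} |log P(x) + K(x)| < ∞. -/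
def KmBoundAbs (P : Measure (Seq × Seq)) (K : S × S → ℕ∞) (A : Set (S × S)) : Prop :=
  ∃ c : ℝ, ∀ x ∈ A, ∃ k : ℕ, K x = (k : ℕ∞) ∧ 0 < P (cyl2 x) ∧
    |Real.logb 2 ((P (cyl2 x)).toReal) + (k : ℝ)| ≤ c

/-- The conditional probability P(·|yinf) is computable relative to the oracle yinf:
there is a partial computable A(x,y,k), monotone in y, approximating P(x|yinf)
to within 1/k along prefixes y of yinf. -/
def CondComputableAt (P : Measure (Seq × Seq)) (yinf : Seq) : Prop :=
  ∃ A : (S × S) × ℕ →. ℚ, Partrec A ∧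
    (∀ (x y z : S) (k : ℕ) (q : ℚ), q ∈ A ((x, y), k) → y <+: z → q ∈ A ((x, z), k)) ∧
    ∀ (x : S) (k : ℕ), 0 < k → ∃ (m : ℕ) (q : ℚ), q ∈ A ((x, seqTake yinf m), k) ∧
      |condPLim P x yinf - (q : ℝ)| < 1 / k

/-- A Martin-Löf test w.r.t. Q which is r.e. relative to the oracle yinf. -/
def RelMLTest (Q : Measure Seq) (yinf : Seq) (U : ℕ → Set S) : Prop :=
  (∃ B : (ℕ × ℕ) × S →. S, Partrec B ∧
      (∀ (i n : ℕ) (y z x : S), x ∈ B ((i, n), y) → y <+: z → x ∈ B ((i, n), z)) ∧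
      ∀ n, U n = {x | ∃ i m, x ∈ B ((i, n), seqTake yinf m)}) ∧
  (∀ n, (⋃ x ∈ U (n + 1), cyl x) ⊆ ⋃ x ∈ U n, cyl x) ∧
  ∀ n, Q (⋃ x ∈ U n, cyl x) < (2⁻¹ : ℝ≥0∞) ^ n

/-- Martin-Löf randomness w.r.t. Q relative to the oracle yinf. -/
def RelMLRandom (Q : Measure Seq) (yinf xinf : Seq) : Prop :=
  ∀ U, RelMLTest Q yinf U → xinf ∉ ⋂ n, ⋃ x ∈ U n, cyl x

/-- Likelihood ratio r(x) = Q(x)/P(x), with value 0 when P(x) = 0. -/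
noncomputable def ratio (P Q : Measure Seq) (x : S) : ℝ :=
  (Q (cyl x)).toReal / (P (cyl x)).toReal

/-- P(·|yinf) f,(xinf,yinf)-effectively converges with rate g. -/
def EffConv (P : Measure (Seq × Seq)) (xinf yinf : Seq) (f : ℕ → ℚ) (g : ℕ → ℕ) : Prop :=
  Computable g ∧ Monotone g ∧
    ∀ x y : S, PrefixSeq x xinf → PrefixSeq y yinf → g x.length ≤ y.length →
      |condP P x y / condPLim P x yinf - 1| < (f x.length : ℝ)

/-- A_g(xinf,yinf) := {(x,y) : |y| = g(|x|), (x,y) ⊏ (xinf,yinf)}. -/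
def AgSec (g : ℕ → ℕ) (xinf yinf : Seq) : Set (S × S) :=
  {xy | xy.2.length = g xy.1.length ∧ PrefixSeq xy.1 xinf ∧ PrefixSeq xy.2 yinf}

/-- A uniformly computable family of probability measures on Ω. -/
def UnifComputableFam (Pn : ℕ → Measure Seq) : Prop :=
  (∀ n, IsProbabilityMeasure (Pn n)) ∧
    ∃ A : (ℕ × S) × ℕ → ℚ, Computable A ∧
      ∀ (n : ℕ) (x : S) (k : ℕ), 0 < k →
        |(A ((n, x), k) : ℝ) - ((Pn n) (cyl x)).toReal| < 1 / k

/-- A computable sequence of reals (e.g. a computable probability on ℕ). -/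
def ComputableRealSeq (α : ℕ → ℝ) : Prop :=
  ∃ a : ℕ × ℕ → ℚ, Computable a ∧ ∀ (n k : ℕ), 0 < k → |α n - (a (n, k) : ℝ)| < 1 / k

/-- The mixture Σ_n α(n) P_n. -/
noncomputable def mixture (α : ℕ → ℝ) (Pn : ℕ → Measure Seq) : Measure Seq :=
  Measure.sum fun n => ENNReal.ofReal (α n) • Pn n

/-- The conditional probability measure P(·|y) on Ω, for a finite string y. -/
noncomputable def condMeasGivenY (P : Measure (Seq × Seq)) (y : S) : Measure Seq :=
  (P (Set.univ ×ˢ cyl y))⁻¹ • ((P.restrict (Set.univ ×ˢ cyl y)).map Prod.fst)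

/-- The posterior distribution P_{Y|X}(·|x) on Ω, for a finite string x. -/
noncomputable def postMeas (P : Measure (Seq × Seq)) (x : S) : Measure Seq :=
  (P (cyl x ×ˢ Set.univ))⁻¹ • ((P.restrict (cyl x ×ˢ Set.univ)).map Prod.snd)


-- === section A ===
def extSeq (x : S) : Seq := fun i => x.getD i false

@[simp] lemma seqTake_length (ω : Seq) (n : ℕ) : (seqTake ω n).length = n := by
  simp [seqTake]

lemma seqTake_getElem (ω : Seq) {n i : ℕ} (h : i < (seqTake ω n).length) :
    (seqTake ω n)[i] = ω i := by
  simp [seqTake]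

lemma prefixSeq_iff_take {x : S} {ω : Seq} {N : ℕ} (h : x.length ≤ N) :
    PrefixSeq x ω ↔ x <+: seqTake ω N := by
  constructor
  · intro hp
    rw [List.prefix_iff_eq_take]
    apply List.ext_getElem
    · simp [Nat.min_eq_left h]
    · intro i h1 h2
      rw [List.getElem_take, seqTake_getElem]
      have := hp ⟨i, h1⟩
      simp only [List.get_eq_getElem] at this
      exact this
  · intro hp i
    have h1 : (i : ℕ) < (seqTake ω N).length := by
      simp only [seqTake_length]
      exact lt_of_lt_of_le i.2 h
    have := hp.getElem (i := (i : ℕ)) (by simpa using i.2)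
    rw [List.get_eq_getElem, this, seqTake_getElem]

lemma prefixSeq_extSeq (x : S) : PrefixSeq x (extSeq x) := by
  intro i
  simp only [extSeq, List.getD_eq_getElem _ _ i.2, List.get_eq_getElem]

lemma seqTake_extSeq (u : S) : seqTake (extSeq u) u.length = u := by
  apply List.ext_getElem (by simp)
  intro i h1 h2
  rw [seqTake_getElem, extSeq, List.getD_eq_getElem _ _ h2]

lemma cyl2_nonempty (z : S × S) : (cyl2 z).Nonempty :=
  ⟨(extSeq z.1, extSeq z.2), prefixSeq_extSeq _, prefixSeq_extSeq _⟩

lemma mem_cyl2_iff {z : S × S} {ω : Seq × Seq} {N : ℕ}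
    (h1 : z.1.length ≤ N) (h2 : z.2.length ≤ N) :
    ω ∈ cyl2 z ↔ z.1 <+: seqTake ω.1 N ∧ z.2 <+: seqTake ω.2 N := by
  unfold cyl2
  rw [Set.mem_prod]
  exact and_congr (prefixSeq_iff_take h1) (prefixSeq_iff_take h2)

lemma prefixSeq_of_prefix {x y : S} {ω : Seq} (h : x <+: y) (hy : PrefixSeq y ω) :
    PrefixSeq x ω := by
  intro i
  have h1 : (i : ℕ) < y.length := lt_of_lt_of_le i.2 h.length_le
  have := hy ⟨i, h1⟩
  simpa [List.get_eq_getElem, h.getElem i.2] using this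

lemma mem_cyl2_of_prefix {z : S × S} {u v : S} (h1 : z.1 <+: u) (h2 : z.2 <+: v) :
    (extSeq u, extSeq v) ∈ cyl2 z :=
  ⟨prefixSeq_of_prefix h1 (prefixSeq_extSeq u), prefixSeq_of_prefix h2 (prefixSeq_extSeq v)⟩


-- === section B ===
def prefB (x u : S) : Bool :=
  decide (x.length ≤ u.length) &&
    (List.range x.length).all fun i => decide (x.getD i false = u.getD i false)

lemma prefB_iff {x u : S} : prefB x u = true ↔ x <+: u := by
  unfold prefB
  simp only [Bool.and_eq_true, decide_eq_true_eq, List.all_eq_true, List.mem_range]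
  constructor
  · rintro ⟨hle, hall⟩
    rw [List.prefix_iff_eq_take]
    apply List.ext_getElem (by simp [Nat.min_eq_left hle])
    intro i h1 h2
    have h3 : i < u.length := lt_of_lt_of_le h1 hle
    have := hall i h1
    rw [List.getD_eq_getElem _ _ h1, List.getD_eq_getElem _ _ h3] at this
    rw [List.getElem_take, this]
  · intro hp
    refine ⟨hp.length_le, fun i hi => ?_⟩
    have h3 : i < u.length := lt_of_lt_of_le hi hp.length_le
    rw [List.getD_eq_getElem _ _ hi, List.getD_eq_getElem _ _ h3, hp.getElem hi]

def coversB (L : List (S × S)) (u v : S) : Bool := L.any fun z => prefB z.1 u && prefB z.2 v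

def cntB (L : List (S × S)) (u v : S) : ℕ := L.countP fun z => prefB z.1 u && prefB z.2 v

def maxLen (L : List (S × S)) : ℕ := L.foldr (fun z m => max (max z.1.length z.2.length) m) 0

lemma maxLen_le {L : List (S × S)} {z : S × S} (h : z ∈ L) :
    z.1.length ≤ maxLen L ∧ z.2.length ≤ maxLen L := by
  induction L with
  | nil => simp at h
  | cons w L ih =>
    rcases List.mem_cons.mp h with rfl | h
    · constructor <;> simp [maxLen, le_max_iff, le_refl]
    · rcases ih h with ⟨h1, h2⟩
      constructor <;> · simp only [maxLen, List.foldr_cons] at *; omega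

def allStrings : ℕ → List S
  | 0 => [[]]
  | N + 1 => (allStrings N).map (false :: ·) ++ (allStrings N).map (true :: ·)

lemma mem_allStrings {N : ℕ} {u : S} : u ∈ allStrings N ↔ u.length = N := by
  induction N generalizing u with
  | zero => simp [allStrings, List.length_eq_zero_iff]
  | succ N ih =>
    simp only [allStrings, List.mem_append, List.mem_map]
    constructor
    · rintro (⟨v, hv, rfl⟩ | ⟨v, hv, rfl⟩) <;> simp [ih.1 hv]
    · intro hu
      cases u with
      | nil => simp at hu
      | cons b v =>
        have : v.length = N := by simpa using hu
        cases b
        · exact Or.inl ⟨v, ih.2 this, rfl⟩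
        · exact Or.inr ⟨v, ih.2 this, rfl⟩

def UL (L : List (S × S)) : Set (Seq × Seq) := ⋃ z ∈ L, cyl2 z

@[simp] lemma UL_nil : UL [] = ∅ := by simp [UL]

@[simp] lemma UL_cons (z : S × S) (L : List (S × S)) : UL (z :: L) = cyl2 z ∪ UL L := by
  simp [UL]

@[simp] lemma UL_append (L M : List (S × S)) : UL (L ++ M) = UL L ∪ UL M := by
  simp [UL, Set.iUnion_or, Set.iUnion_union_distrib]

lemma seqTake_extSeq' {u : S} {N : ℕ} (hu : u.length = N) : seqTake (extSeq u) N = u := by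
  rw [← hu]; exact seqTake_extSeq u

lemma mem_ext_iff_prefix {z : S × S} {u v : S} {N : ℕ}
    (hu : u.length = N) (hv : v.length = N)
    (h1 : z.1.length ≤ N) (h2 : z.2.length ≤ N) :
    (extSeq u, extSeq v) ∈ cyl2 z ↔ z.1 <+: u ∧ z.2 <+: v := by
  rw [mem_cyl2_iff h1 h2]
  simp only [seqTake_extSeq' hu, seqTake_extSeq' hv]

lemma coversB_iff_mem_ext {L : List (S × S)} {u v : S} {N : ℕ}
    (hu : u.length = N) (hv : v.length = N)
    (hlen : ∀ z ∈ L, z.1.length ≤ N ∧ z.2.length ≤ N) :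
    coversB L u v = true ↔ (extSeq u, extSeq v) ∈ UL L := by
  unfold coversB UL
  simp only [List.any_eq_true, Bool.and_eq_true, prefB_iff, Set.mem_iUnion]
  constructor
  · rintro ⟨z, hz, hp1, hp2⟩
    exact ⟨z, hz, mem_cyl2_of_prefix hp1 hp2⟩
  · rintro ⟨z, hz, hm⟩
    exact ⟨z, hz, (mem_ext_iff_prefix hu hv (hlen z hz).1 (hlen z hz).2).mp hm⟩

def chkN (β B : List (S × S)) (a : S × S) : ℕ := max (maxLen (a :: B)) (maxLen β)

def chk (β B : List (S × S)) (a : S × S) : Bool :=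
  (allStrings (chkN β B a)).all fun u =>
    (allStrings (chkN β B a)).all fun v =>
      (coversB β u v == (prefB a.1 u && prefB a.2 v && !coversB B u v)) &&
        decide (cntB β u v ≤ 1)


-- === section B2 : chk specification ===
lemma coversB_seqTake_iff {L : List (S × S)} {ω : Seq × Seq} {N : ℕ}
    (hlen : ∀ z ∈ L, z.1.length ≤ N ∧ z.2.length ≤ N) :
    coversB L (seqTake ω.1 N) (seqTake ω.2 N) = true ↔ ω ∈ UL L := by
  unfold coversB UL
  simp only [List.any_eq_true, Bool.and_eq_true, prefB_iff, Set.mem_iUnion]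
  constructor
  · rintro ⟨z, hz, h1, h2⟩
    exact ⟨z, hz, (mem_cyl2_iff (hlen z hz).1 (hlen z hz).2).mpr ⟨h1, h2⟩⟩
  · rintro ⟨z, hz, hm⟩
    obtain ⟨h1, h2⟩ := (mem_cyl2_iff (hlen z hz).1 (hlen z hz).2).mp hm
    exact ⟨z, hz, h1, h2⟩

lemma prefB_pair_seqTake_iff {a : S × S} {ω : Seq × Seq} {N : ℕ}
    (h1 : a.1.length ≤ N) (h2 : a.2.length ≤ N) :
    (prefB a.1 (seqTake ω.1 N) && prefB a.2 (seqTake ω.2 N)) = true ↔ ω ∈ cyl2 a := by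
  rw [Bool.and_eq_true, prefB_iff, prefB_iff, mem_cyl2_iff h1 h2]

lemma cnt_of_pairwise {β : List (S × S)}
    (hpw : β.Pairwise fun z w => cyl2 z ∩ cyl2 w = ∅) (u v : S) : cntB β u v ≤ 1 := by
  induction β with
  | nil => simp [cntB]
  | cons z rest ih =>
    rcases List.pairwise_cons.mp hpw with ⟨hz, htail⟩
    unfold cntB at *
    rw [List.countP_cons]
    by_cases hp : (prefB z.1 u && prefB z.2 v) = true
    · have h0 : rest.countP (fun z => prefB z.1 u && prefB z.2 v) = 0 := by
        rw [List.countP_eq_zero]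
        intro w hw hpw'
        rw [Bool.and_eq_true, prefB_iff, prefB_iff] at hp hpw'
        have hmem : (extSeq u, extSeq v) ∈ cyl2 z ∩ cyl2 w :=
          ⟨mem_cyl2_of_prefix hp.1 hp.2, mem_cyl2_of_prefix hpw'.1 hpw'.2⟩
        rw [hz w hw] at hmem
        exact hmem
      simp [h0, hp]
    · simpa [hp] using ih htail

lemma pairwise_of_cnt {β : List (S × S)} {N : ℕ}
    (hlen : ∀ z ∈ β, z.1.length ≤ N ∧ z.2.length ≤ N)
    (hc : ∀ u : S, u.length = N → ∀ v : S, v.length = N → cntB β u v ≤ 1) :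
    β.Pairwise fun z w => cyl2 z ∩ cyl2 w = ∅ := by
  induction β with
  | nil => exact List.Pairwise.nil
  | cons z rest ih =>
    refine List.pairwise_cons.mpr ⟨?_, ?_⟩
    · intro w hw
      by_contra hne
      obtain ⟨ω, hω⟩ := Set.nonempty_iff_ne_empty.mpr hne
      set u := seqTake ω.1 N with hu
      set v := seqTake ω.2 N with hv
      have hz1 := hlen z (List.mem_cons_self)
      have hw1 := hlen w (List.mem_cons_of_mem z hw)
      have pz : (prefB z.1 u && prefB z.2 v) = true := by
        rw [Bool.and_eq_true, prefB_iff, prefB_iff]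
        exact (mem_cyl2_iff hz1.1 hz1.2).mp hω.1
      have pw : (prefB w.1 u && prefB w.2 v) = true := by
        rw [Bool.and_eq_true, prefB_iff, prefB_iff]
        exact (mem_cyl2_iff hw1.1 hw1.2).mp hω.2
      have h2 : 2 ≤ cntB (z :: rest) u v := by
        unfold cntB
        rw [List.countP_cons, if_pos pz]
        have : 0 < rest.countP (fun z => prefB z.1 u && prefB z.2 v) :=
          List.countP_pos_iff.mpr ⟨w, hw, pw⟩
        omega
      have := hc u (by simp [hu]) v (by simp [hv])
      omega
    · refine ih (fun w hw => hlen w (List.mem_cons_of_mem z hw)) (fun u hu v hv => ?_)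
      have := hc u hu v hv
      unfold cntB at *
      rw [List.countP_cons] at this
      omega

lemma chk_iff {β B : List (S × S)} {a : S × S} :
    chk β B a = true ↔
      (β.Pairwise fun z w => cyl2 z ∩ cyl2 w = ∅) ∧ UL β = cyl2 a ∩ (UL B)ᶜ := by
  set N := chkN β B a with hN
  have hlenβ : ∀ z ∈ β, z.1.length ≤ N ∧ z.2.length ≤ N := fun z hz =>
    ⟨le_trans (maxLen_le hz).1 (le_max_right _ _), le_trans (maxLen_le hz).2 (le_max_right _ _)⟩
  have hlenB : ∀ z ∈ B, z.1.length ≤ N ∧ z.2.length ≤ N := fun z hz =>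
    ⟨le_trans (maxLen_le (List.mem_cons_of_mem a hz)).1 (le_max_left _ _),
     le_trans (maxLen_le (List.mem_cons_of_mem a hz)).2 (le_max_left _ _)⟩
  have hlena : a.1.length ≤ N ∧ a.2.length ≤ N :=
    ⟨le_trans (maxLen_le (List.mem_cons_self)).1 (le_max_left _ _),
     le_trans (maxLen_le (List.mem_cons_self)).2 (le_max_left _ _)⟩
  have hunf : chk β B a = true ↔ ∀ u : S, u.length = N → ∀ v : S, v.length = N →
      (coversB β u v = (prefB a.1 u && prefB a.2 v && !coversB B u v) ∧ cntB β u v ≤ 1) := by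
    unfold chk
    simp only [List.all_eq_true, mem_allStrings, Bool.and_eq_true, beq_iff_eq,
      decide_eq_true_eq, ← hN]
  rw [hunf]
  constructor
  · intro H
    refine ⟨pairwise_of_cnt hlenβ (fun u hu v hv => (H u hu v hv).2), ?_⟩
    ext ω
    have hu : (seqTake ω.1 N).length = N := by simp
    have hv : (seqTake ω.2 N).length = N := by simp
    have hcov := (H _ hu _ hv).1
    have e1 := coversB_seqTake_iff (ω := ω) hlenβ
    have e2 := coversB_seqTake_iff (ω := ω) hlenB
    have e3 := prefB_pair_seqTake_iff (ω := ω) hlena.1 hlena.2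
    rw [← e1, hcov, Bool.and_eq_true, Bool.not_eq_true', Set.mem_inter_iff,
      Set.mem_compl_iff, ← e3, ← e2]
    simp [Bool.not_eq_true]
  · rintro ⟨hpw, heq⟩ u hu v hv
    refine ⟨?_, cnt_of_pairwise hpw u v⟩
    have e1 := coversB_iff_mem_ext (v := v) hu hv hlenβ
    have e2 := coversB_iff_mem_ext (v := v) hu hv hlenB
    have e3' : (prefB a.1 u && prefB a.2 v) = true ↔ (extSeq u, extSeq v) ∈ cyl2 a := by
      rw [Bool.and_eq_true, prefB_iff, prefB_iff]
      exact (mem_ext_iff_prefix (v := v) hu hv hlena.1 hlena.2).symm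
    rw [Bool.eq_iff_iff, e1, heq, Set.mem_inter_iff, Set.mem_compl_iff, ← e3', ← e2]
    simp [Bool.not_eq_true]


-- === section C : cond5 iteration ===
lemma isOpen_cyl (x : S) : IsOpen (cyl x) := by
  have : cyl x = ⋂ i : Fin x.length, (fun ω : Seq => ω i.val) ⁻¹' {x.get i} := by
    ext ω
    simp only [cyl, Set.mem_setOf_eq, PrefixSeq, Set.mem_iInter, Set.mem_preimage,
      Set.mem_singleton_iff]
    exact ⟨fun h i => (h i).symm, fun h i => (h i).symm⟩
  rw [this]
  exact isOpen_iInter_of_finite fun i =>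
    (continuous_apply i.val).isOpen_preimage _ (isOpen_discrete _)

lemma isClosed_cyl (x : S) : IsClosed (cyl x) := by
  have : cyl x = ⋂ i : Fin x.length, (fun ω : Seq => ω i.val) ⁻¹' {x.get i} := by
    ext ω
    simp only [cyl, Set.mem_setOf_eq, PrefixSeq, Set.mem_iInter, Set.mem_preimage,
      Set.mem_singleton_iff]
    exact ⟨fun h i => (h i).symm, fun h i => (h i).symm⟩
  rw [this]
  exact isClosed_iInter fun i =>
    IsClosed.preimage (continuous_apply i.val) (isClosed_discrete _)

lemma isOpen_cyl2 (z : S × S) : IsOpen (cyl2 z) := (isOpen_cyl z.1).prod (isOpen_cyl z.2)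

lemma isClosed_cyl2 (z : S × S) : IsClosed (cyl2 z) := (isClosed_cyl z.1).prod (isClosed_cyl z.2)

lemma finite_of_nonoverlap_cover {α : Set (S × S)} {T : Set (Seq × Seq)} (hT : IsClosed T)
    (hno : NonOverlapF α) (hU : T = ⋃ z ∈ α, cyl2 z) : α.Finite := by
  have hcpt : IsCompact T := hT.isCompact
  have hcov : T ⊆ ⋃ z : α, cyl2 z.val := by
    rw [hU]; intro ω hω
    simp only [Set.mem_iUnion] at *
    obtain ⟨z, hz, h⟩ := hω
    exact ⟨⟨z, hz⟩, h⟩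
  obtain ⟨t, ht⟩ := hcpt.elim_finite_subcover (fun z : α => cyl2 z.val)
    (fun z => isOpen_cyl2 z.val) hcov
  refine Set.Finite.subset ((t.finite_toSet).image (fun z : α => z.val)) ?_
  intro z hz
  obtain ⟨ω, hω⟩ := cyl2_nonempty z
  have hωT : ω ∈ T := by
    rw [hU]; exact Set.mem_biUnion hz hω
  have := ht hωT
  simp only [Set.mem_iUnion] at this
  obtain ⟨w, hw, hmem⟩ := this
  have hzw : z = w.val := by
    by_contra hne
    have := hno hz w.2 hne
    have : ω ∈ cyl2 z ∩ cyl2 w.val := ⟨hω, hmem⟩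
    rw [hno hz w.2 hne] at this
    exact this
  exact ⟨w, hw, hzw.symm⟩

lemma exists_good_inter {A : Set (S × S)} (h5 : Cond5 A) {z b : S × S}
    (hz : z ∈ A) (hb : b ∈ A) :
    ∃ γ : List (S × S), (∀ w ∈ γ, w ∈ A) ∧
      (γ.Pairwise fun p q => cyl2 p ∩ cyl2 q = ∅) ∧ UL γ = cyl2 z ∩ (cyl2 b)ᶜ := by
  obtain ⟨α, hαA, hno, heq⟩ := h5 z hz b hb
  have hclosed : IsClosed (cyl2 z ∩ (cyl2 b)ᶜ) :=
    (isClosed_cyl2 z).inter (isOpen_cyl2 b).isClosed_compl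
  have hfin : α.Finite := finite_of_nonoverlap_cover hclosed hno heq
  refine ⟨hfin.toFinset.toList, ?_, ?_, ?_⟩
  · intro w hw
    rw [Finset.mem_toList, Set.Finite.mem_toFinset] at hw
    exact hαA hw
  · refine List.Nodup.pairwise_of_forall_ne (Finset.nodup_toList _) ?_
    intro p hp q hq hne
    rw [Finset.mem_toList, Set.Finite.mem_toFinset] at hp hq
    exact hno hp hq hne
  · rw [heq]
    ext ω
    simp only [UL, Set.mem_iUnion, Finset.mem_toList, Set.Finite.mem_toFinset]

lemma restrict_list {A : Set (S × S)} (h5 : Cond5 A) {b : S × S} (hb : b ∈ A) :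
    ∀ (β' : List (S × S)), (∀ w ∈ β', w ∈ A) →
      (β'.Pairwise fun p q => cyl2 p ∩ cyl2 q = ∅) →
      ∃ β : List (S × S), (∀ w ∈ β, w ∈ A) ∧
        (β.Pairwise fun p q => cyl2 p ∩ cyl2 q = ∅) ∧ UL β = UL β' ∩ (cyl2 b)ᶜ := by
  intro β'
  induction β' with
  | nil => exact fun _ _ => ⟨[], by simp, List.Pairwise.nil, by simp⟩
  | cons z rest ih =>
    intro hall hpw
    obtain ⟨hzr, hpwr⟩ := List.pairwise_cons.mp hpw
    obtain ⟨δ, hδA, hδpw, hδU⟩ := ih (fun w hw => hall w (List.mem_cons_of_mem z hw)) hpwr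
    obtain ⟨γ, hγA, hγpw, hγU⟩ := exists_good_inter h5 (hall z (List.mem_cons_self)) hb
    refine ⟨γ ++ δ, ?_, ?_, ?_⟩
    · intro w hw
      rcases List.mem_append.mp hw with h | h
      · exact hγA w h
      · exact hδA w h
    · rw [List.pairwise_append]
      refine ⟨hγpw, hδpw, ?_⟩
      intro p hp q hq
      have hpz : cyl2 p ⊆ cyl2 z := by
        intro ω hω
        have : ω ∈ UL γ := Set.mem_biUnion hp hω
        rw [hγU] at this
        exact this.1
      have hqr : cyl2 q ⊆ UL rest := by
        intro ω hω
        have : ω ∈ UL δ := Set.mem_biUnion hq hω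
        rw [hδU] at this
        exact this.1
      have hdisj : cyl2 z ∩ UL rest = ∅ := by
        apply Set.eq_empty_iff_forall_notMem.mpr
        rintro ω ⟨h1, h2⟩
        simp only [UL, Set.mem_iUnion] at h2
        obtain ⟨w, hw, hmem⟩ := h2
        have := hzr w hw
        have : ω ∈ cyl2 z ∩ cyl2 w := ⟨h1, hmem⟩
        rw [hzr w hw] at this
        exact this
      apply Set.eq_empty_iff_forall_notMem.mpr
      rintro ω ⟨h1, h2⟩
      have : ω ∈ cyl2 z ∩ UL rest := ⟨hpz h1, hqr h2⟩
      rw [hdisj] at this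
      exact this
    · rw [UL_append, hγU, hδU, UL_cons]
      rw [Set.union_inter_distrib_right]

lemma exists_beta {A : Set (S × S)} (h5 : Cond5 A) {a : S × S} (ha : a ∈ A)
    (B : List (S × S)) (hB : ∀ b ∈ B, b ∈ A) :
    ∃ β : List (S × S), (∀ w ∈ β, w ∈ A) ∧
      (β.Pairwise fun p q => cyl2 p ∩ cyl2 q = ∅) ∧ UL β = cyl2 a ∩ (UL B)ᶜ := by
  induction B with
  | nil => exact ⟨[a], by simpa using ha, by simp, by simp⟩
  | cons b B' ih =>
    obtain ⟨β', hβ'A, hβ'pw, hβ'U⟩ := ih (fun w hw => hB w (List.mem_cons_of_mem b hw))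
    obtain ⟨β, hβA, hβpw, hβU⟩ :=
      restrict_list h5 (hB b (List.mem_cons_self)) β' hβ'A hβ'pw
    refine ⟨β, hβA, hβpw, ?_⟩
    rw [hβU, hβ'U, UL_cons, Set.compl_union, Set.inter_assoc, Set.inter_comm (cyl2 b)ᶜ]


-- === section D : the machine and its computability ===
def subB (β L : List (S × S)) : Bool := β.all fun z => L.any fun w => decide (w = z)

lemma subB_iff {β L : List (S × S)} : subB β L = true ↔ ∀ z ∈ β, z ∈ L := by
  unfold subB
  simp only [List.all_eq_true, List.any_eq_true, decide_eq_true_eq]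
  constructor
  · rintro h z hz
    obtain ⟨w, hw, rfl⟩ := h z hz
    exact hw
  · intro h z hz
    exact ⟨z, h z hz, rfl⟩

def findB (L : List (S × S)) (s : ℕ) (B : List (S × S)) (a : S × S) :
    Option (List (S × S)) :=
  (List.range s).findSome? fun c =>
    (Encodable.decode (α := List (S × S)) c).bind fun β =>
      bif subB β L && chk β B a then some β else none

lemma exists_of_findSome? {α β : Type*} {g : α → Option β} :
    ∀ {l : List α} {b : β}, l.findSome? g = some b → ∃ a ∈ l, g a = some b := by
  intro l
  induction l with
  | nil => intro b h; simp [List.findSome?_nil] at h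
  | cons a l ih =>
    intro b h
    rw [List.findSome?_cons] at h
    cases hg : g a with
    | none => rw [hg] at h; obtain ⟨a', ha', h'⟩ := ih h; exact ⟨a', List.mem_cons_of_mem _ ha', h'⟩
    | some b' => rw [hg] at h; exact ⟨a, List.mem_cons_self, by rw [hg, ← h]⟩

lemma findB_some {L : List (S × S)} {s : ℕ} {B : List (S × S)} {a : S × S}
    {β : List (S × S)} (h : findB L s B a = some β) :
    subB β L = true ∧ chk β B a = true := by
  unfold findB at h
  obtain ⟨c, _, hc⟩ := exists_of_findSome? h
  cases hdec : (Encodable.decode c : Option (List (S × S))) with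
  | none => rw [hdec] at hc; simp at hc
  | some β' =>
    rw [hdec] at hc
    simp only [Option.bind_some] at hc
    cases hcond : (subB β' L && chk β' B a) with
    | false => rw [hcond] at hc; simp at hc
    | true =>
      rw [hcond] at hc
      simp only [cond_true, Option.some_inj] at hc
      subst hc
      exact ⟨(Bool.and_eq_true _ _ |>.mp hcond).1, (Bool.and_eq_true _ _ |>.mp hcond).2⟩

lemma findB_isSome_of {L : List (S × S)} {s : ℕ} {B : List (S × S)} {a : S × S}
    {β : List (S × S)} (c : ℕ) (hc : c < s)
    (hdec : (Encodable.decode c : Option (List (S × S))) = some β)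
    (hsub : subB β L = true) (hchk : chk β B a = true) : (findB L s B a).isSome := by
  rw [Option.isSome_iff_ne_none]
  intro hnone
  unfold findB at hnone
  have := List.findSome?_eq_none_iff.mp hnone c (List.mem_range.mpr hc)
  rw [hdec] at this
  simp only [Option.bind_some, hsub, hchk, Bool.and_self, cond_true] at this
  exact Option.some_ne_none β this

def enumBy (fA : ℕ → Option (S × S)) : ℕ → List (S × S) :=
  fun s => Nat.rec [] (fun n L => L ++ (fA n).toList) s

lemma mem_enumBy {fA : ℕ → Option (S × S)} {z : S × S} {s : ℕ} :
    z ∈ enumBy fA s ↔ ∃ n < s, fA n = some z := by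
  induction s with
  | zero => simp [enumBy]
  | succ s ih =>
    show z ∈ enumBy fA s ++ (fA s).toList ↔ _
    simp only [List.mem_append, ih, Option.mem_toList, Option.mem_def]
    constructor
    · rintro (⟨n, hn, h⟩ | h)
      · exact ⟨n, Nat.lt_succ_of_lt hn, h⟩
      · exact ⟨s, Nat.lt_succ_self s, h⟩
    · rintro ⟨n, hn, h⟩
      rcases Nat.lt_succ_iff_lt_or_eq.mp hn with hn | rfl
      · exact Or.inl ⟨n, hn, h⟩
      · exact Or.inr h

def stepF (oa : Option (S × S)) (L : List (S × S)) (s : ℕ) (st : ℕ × List (S × S)) :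
    ℕ × List (S × S) :=
  Option.casesOn (motive := fun _ => ℕ × List (S × S)) oa (st.1 + 1, st.2) fun a =>
    Option.casesOn (motive := fun _ => ℕ × List (S × S)) (findB L s st.2 a) st
      fun β => (st.1 + 1, st.2 ++ β)

def machine (fA fA' : ℕ → Option (S × S)) : ℕ → ℕ × List (S × S) :=
  fun s => Nat.rec ((0 : ℕ), ([] : List (S × S)))
    (fun n st => stepF (fA' st.1) (enumBy fA n) n st) s

def enumF (fA fA' : ℕ → Option (S × S)) (m : ℕ) : Option (S × S) :=
  (machine fA fA' m.unpair.1).2[m.unpair.2]?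

section PrimrecHelpers

lemma prim2_mk {τ β σ : Type} [Primcodable τ] [Primcodable β] [Primcodable σ]
    {f : τ → β → σ} (h : Primrec fun p : τ × β => f p.1 p.2) : Primrec₂ f := h

variable {τ β σ : Type} [Primcodable τ] [Primcodable β] [Primcodable σ]

lemma prim_band {f g : τ → Bool} (hf : Primrec f) (hg : Primrec g) :
    Primrec fun a => f a && g a := by
  have := Primrec.cond hf hg (Primrec.const false)
  exact this.of_eq fun a => by cases f a <;> simp

lemma prim_bnot {f : τ → Bool} (hf : Primrec f) : Primrec fun a => !f a := by
  have := Primrec.cond hf (Primrec.const false) (Primrec.const true)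
  exact this.of_eq fun a => by cases f a <;> simp

lemma prim_all {l : τ → List β} {p : τ → β → Bool} (hl : Primrec l) (hp : Primrec₂ p) :
    Primrec fun a => (l a).all (p a) := by
  have key : ∀ (q : β → Bool) (L : List β), L.foldr (fun b r => q b && r) true = L.all q := by
    intro q L
    induction L with
    | nil => rfl
    | cons b L ih => simp [List.all_cons, ih]
  have := Primrec.list_foldr hl (Primrec.const true)
    (Primrec.to₂ (prim_band (hp.comp Primrec.fst (Primrec.fst.comp Primrec.snd))
      (Primrec.snd.comp Primrec.snd)))
  exact this.of_eq fun a => key (p a) (l a)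

lemma prim_any {l : τ → List β} {p : τ → β → Bool} (hl : Primrec l) (hp : Primrec₂ p) :
    Primrec fun a => (l a).any (p a) := by
  have key : ∀ (q : β → Bool) (L : List β), L.foldr (fun b r => q b || r) false = L.any q := by
    intro q L
    induction L with
    | nil => rfl
    | cons b L ih => simp [List.any_cons, ih]
  have hstep : Primrec fun (a : τ × β × Bool) => p a.1 a.2.1 || a.2.2 :=
    (Primrec.cond (hp.comp Primrec.fst (Primrec.fst.comp Primrec.snd))
      (Primrec.const true) (Primrec.snd.comp Primrec.snd)).of_eq
      fun a => by cases hh : p a.1 a.2.1 <;> simp [hh]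
  have := Primrec.list_foldr hl (Primrec.const false) hstep.to₂
  exact this.of_eq fun a => key (p a) (l a)

lemma prim_countP {l : τ → List β} {p : τ → β → Bool} (hl : Primrec l) (hp : Primrec₂ p) :
    Primrec fun a => (l a).countP (p a) := by
  have key : ∀ (q : β → Bool) (L : List β),
      L.foldr (fun b r => bif q b then r + 1 else r) 0 = L.countP q := by
    intro q L
    induction L with
    | nil => rfl
    | cons b L ih =>
      rw [List.foldr_cons, ih, List.countP_cons]
      cases hb : q b <;> simp [hb]
  have hstep : Primrec₂ fun (x : τ) (p2 : β × ℕ) => bif p x p2.1 then p2.2 + 1 else p2.2 :=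
    Primrec.to₂ (Primrec.cond (hp.comp Primrec.fst (Primrec.fst.comp Primrec.snd))
      (Primrec.succ.comp (Primrec.snd.comp Primrec.snd)) (Primrec.snd.comp Primrec.snd))
  have := Primrec.list_foldr hl (Primrec.const 0) hstep
  exact this.of_eq fun a => key (p a) (l a)

lemma prim_findSome {l : τ → List β} {g : τ → β → Option σ}
    (hl : Primrec l) (hg : Primrec₂ g) :
    Primrec fun a => (l a).findSome? (g a) := by
  have key : ∀ (q : β → Option σ) (L : List β),
      L.foldr (fun b r => (q b).orElse (fun _ => r)) none = L.findSome? q := by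
    intro q L
    induction L with
    | nil => rfl
    | cons b L ih =>
      rw [List.foldr_cons, ih, List.findSome?_cons]
      cases hb : q b <;> simp [hb, Option.orElse]
  have hstep : Primrec fun (a : τ × β × Option σ) => (g a.1 a.2.1).orElse (fun _ => a.2.2) :=
    (Primrec.option_orElse.comp
      (hg.comp Primrec.fst (Primrec.fst.comp Primrec.snd))
      (Primrec.snd.comp Primrec.snd)).of_eq
      fun a => by cases g a.1 a.2.1 <;> simp [Option.orElse]
  have := Primrec.list_foldr hl (Primrec.const none) hstep.to₂
  exact this.of_eq fun a => key (g a) (l a)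

end PrimrecHelpers

lemma prim_prefB : Primrec₂ prefB := by
  unfold prefB
  apply prim2_mk
  apply prim_band
  · exact PrimrecPred.decide (p := fun p : S × S => p.1.length ≤ p.2.length)
      (Primrec.nat_le.comp (Primrec.list_length.comp Primrec.fst)
      (Primrec.list_length.comp Primrec.snd))
  · apply prim_all (Primrec.list_range.comp (Primrec.list_length.comp Primrec.fst))
    apply prim2_mk
    exact PrimrecPred.decide
      (p := fun p : (S × S) × ℕ => List.getD p.1.1 p.2 false = List.getD p.1.2 p.2 false)
      (Primrec.eq.comp
      ((Primrec.list_getD false).comp (Primrec.fst.comp Primrec.fst) Primrec.snd)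
      ((Primrec.list_getD false).comp (Primrec.snd.comp Primrec.fst) Primrec.snd))

-- coversB as a function of (L, u, v)
lemma prim_coversB : Primrec fun x : List (S × S) × S × S => coversB x.1 x.2.1 x.2.2 := by
  unfold coversB
  apply prim_any Primrec.fst
  apply prim2_mk
  apply prim_band
  · exact prim_prefB.comp (Primrec.fst.comp Primrec.snd)
      (Primrec.fst.comp (Primrec.snd.comp Primrec.fst))
  · exact prim_prefB.comp (Primrec.snd.comp Primrec.snd)
      (Primrec.snd.comp (Primrec.snd.comp Primrec.fst))

lemma prim_cntB : Primrec fun x : List (S × S) × S × S => cntB x.1 x.2.1 x.2.2 := by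
  unfold cntB
  apply prim_countP Primrec.fst
  apply prim2_mk
  apply prim_band
  · exact prim_prefB.comp (Primrec.fst.comp Primrec.snd)
      (Primrec.fst.comp (Primrec.snd.comp Primrec.fst))
  · exact prim_prefB.comp (Primrec.snd.comp Primrec.snd)
      (Primrec.snd.comp (Primrec.snd.comp Primrec.fst))

lemma prim_maxLen : Primrec maxLen := by
  have hstep : Primrec fun p : List (S × S) × ((S × S) × ℕ) =>
      max (max p.2.1.1.length p.2.1.2.length) p.2.2 :=
    Primrec.nat_max.comp
      (Primrec.nat_max.comp
        (Primrec.list_length.comp (Primrec.fst.comp (Primrec.fst.comp Primrec.snd)))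
        (Primrec.list_length.comp (Primrec.snd.comp (Primrec.fst.comp Primrec.snd))))
      (Primrec.snd.comp Primrec.snd)
  have := Primrec.list_foldr (α := List (S × S)) (β := S × S) (σ := ℕ)
    (f := id) (g := fun _ => 0)
    (h := fun _ p => max (max p.1.1.length p.1.2.length) p.2)
    Primrec.id (Primrec.const 0) (prim2_mk hstep)
  exact this.of_eq fun l => rfl

lemma prim_allStrings : Primrec allStrings := by
  have step : Primrec₂ fun (_ : ℕ) (L : List S) =>
      L.map (false :: ·) ++ L.map (true :: ·) := by
    apply prim2_mk
    apply Primrec.list_append.comp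
      (Primrec.list_map Primrec.snd
        (Primrec.to₂ (Primrec.list_cons.comp (Primrec.const false) Primrec.snd)))
      (Primrec.list_map Primrec.snd
        (Primrec.to₂ (Primrec.list_cons.comp (Primrec.const true) Primrec.snd)))
  have := Primrec.nat_rec₁ ([[]] : List S) step
  exact this.of_eq fun n => by
    induction n with
    | zero => rfl
    | succ n ih => simp [allStrings, ← ih]

abbrev Ctx : Type := List (S × S) × List (S × S) × (S × S)

def chkCell (x : Ctx) (u v : S) : Bool :=
  (coversB x.1 u v == (prefB x.2.2.1 u && prefB x.2.2.2 v && !coversB x.2.1 u v)) &&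
    decide (cntB x.1 u v ≤ 1)

lemma prim_chkN : Primrec fun x : Ctx => chkN x.1 x.2.1 x.2.2 := by
  unfold chkN
  exact Primrec.nat_max.comp
    (prim_maxLen.comp (Primrec.list_cons.comp (Primrec.snd.comp Primrec.snd)
      (Primrec.fst.comp Primrec.snd)))
    (prim_maxLen.comp Primrec.fst)

lemma prim_chkCell : Primrec fun y : (Ctx × S) × S => chkCell y.1.1 y.1.2 y.2 := by
  have hx : Primrec fun y : (Ctx × S) × S => y.1.1 := Primrec.fst.comp Primrec.fst
  have hu : Primrec fun y : (Ctx × S) × S => y.1.2 := Primrec.snd.comp Primrec.fst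
  have hv : Primrec fun y : (Ctx × S) × S => y.2 := Primrec.snd
  have hbet : Primrec fun y : (Ctx × S) × S => y.1.1.1 := Primrec.fst.comp hx
  have hB : Primrec fun y : (Ctx × S) × S => y.1.1.2.1 :=
    Primrec.fst.comp (Primrec.snd.comp hx)
  have ha1 : Primrec fun y : (Ctx × S) × S => y.1.1.2.2.1 :=
    Primrec.fst.comp (Primrec.snd.comp (Primrec.snd.comp hx))
  have ha2 : Primrec fun y : (Ctx × S) × S => y.1.1.2.2.2 :=
    Primrec.snd.comp (Primrec.snd.comp (Primrec.snd.comp hx))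
  unfold chkCell
  apply prim_band
  · apply Primrec.beq.comp
    · exact prim_coversB.comp (Primrec.pair hbet (Primrec.pair hu hv))
    · apply prim_band
      · apply prim_band
        · exact prim_prefB.comp ha1 hu
        · exact prim_prefB.comp ha2 hv
      · exact prim_bnot (prim_coversB.comp (Primrec.pair hB (Primrec.pair hu hv)))
  · exact PrimrecPred.decide (p := fun a : (Ctx × S) × S => cntB a.1.1.1 a.1.2 a.2 ≤ 1)
      (Primrec.nat_le.comp (prim_cntB.comp (Primrec.pair hbet (Primrec.pair hu hv)))
      (Primrec.const 1))

lemma prim_chk : Primrec fun x : Ctx => chk x.1 x.2.1 x.2.2 := by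
  have inner : Primrec fun y : Ctx × S =>
      (allStrings (chkN y.1.1 y.1.2.1 y.1.2.2)).all fun v => chkCell y.1 y.2 v :=
    prim_all (prim_allStrings.comp (prim_chkN.comp Primrec.fst)) (prim2_mk prim_chkCell)
  have outer : Primrec fun x : Ctx =>
      (allStrings (chkN x.1 x.2.1 x.2.2)).all fun u =>
        (allStrings (chkN x.1 x.2.1 x.2.2)).all fun v => chkCell x u v :=
    prim_all (prim_allStrings.comp prim_chkN) (prim2_mk inner)
  exact outer.of_eq fun x => rfl

lemma prim_subB : Primrec₂ subB := by
  unfold subB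
  apply prim2_mk
  apply prim_all Primrec.fst
  apply prim2_mk
  apply prim_any (Primrec.snd.comp Primrec.fst)
  apply prim2_mk
  exact PrimrecPred.decide
    (p := fun q : ((List (S × S) × List (S × S)) × (S × S)) × (S × S) => q.2 = q.1.2)
    (Primrec.eq.comp Primrec.snd (Primrec.snd.comp Primrec.fst))

attribute [irreducible] chk subB

abbrev Ctx2 : Type := List (S × S) × ℕ × List (S × S) × (S × S)

lemma prim_findB : Primrec fun x : Ctx2 => findB x.1 x.2.1 x.2.2.1 x.2.2.2 := by
  have hdec : Primrec fun y : Ctx2 × ℕ => (Encodable.decode y.2 : Option (List (S × S))) :=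
    Primrec.decode.comp Primrec.snd
  have hbody : Primrec fun z : (Ctx2 × ℕ) × List (S × S) =>
      bif subB z.2 z.1.1.1 && chk z.2 z.1.1.2.2.1 z.1.1.2.2.2 then some z.2 else none := by
    have hbet : Primrec fun z : (Ctx2 × ℕ) × List (S × S) => z.2 := Primrec.snd
    have hL : Primrec fun z : (Ctx2 × ℕ) × List (S × S) => z.1.1.1 :=
      Primrec.fst.comp (Primrec.fst.comp Primrec.fst)
    have hB : Primrec fun z : (Ctx2 × ℕ) × List (S × S) => z.1.1.2.2.1 :=
      Primrec.fst.comp (Primrec.snd.comp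
        (Primrec.snd.comp (Primrec.fst.comp Primrec.fst)))
    have ha : Primrec fun z : (Ctx2 × ℕ) × List (S × S) => z.1.1.2.2.2 :=
      Primrec.snd.comp (Primrec.snd.comp
        (Primrec.snd.comp (Primrec.fst.comp Primrec.fst)))
    apply Primrec.cond
    · apply prim_band
      · exact prim_subB.comp hbet hL
      · exact prim_chk.comp (Primrec.pair hbet (Primrec.pair hB ha))
    · exact Primrec.option_some.comp hbet
    · exact Primrec.const none
  have hg : Primrec fun y : Ctx2 × ℕ =>
      (Encodable.decode y.2 : Option (List (S × S))).bind fun β =>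
        bif subB β y.1.1 && chk β y.1.2.2.1 y.1.2.2.2 then some β else none :=
    Primrec.option_bind hdec (prim2_mk hbody)
  have hg2 : Primrec₂ fun (y : Ctx2) (c : ℕ) =>
      (Encodable.decode c : Option (List (S × S))).bind fun β =>
        bif subB β y.1 && chk β y.2.2.1 y.2.2.2 then some β else none := hg
  have := prim_findSome (Primrec.list_range.comp (Primrec.fst.comp Primrec.snd)) hg2
  exact this.of_eq fun x => rfl

attribute [irreducible] findB

abbrev Ctx3 : Type := Option (S × S) × List (S × S) × ℕ × (ℕ × List (S × S))

lemma prim_stepF : Primrec fun x : Ctx3 => stepF x.1 x.2.1 x.2.2.1 x.2.2.2 := by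
  have hst : Primrec fun x : Ctx3 => x.2.2.2 :=
    Primrec.snd.comp (Primrec.snd.comp Primrec.snd)
  have hnone : Primrec fun x : Ctx3 => (x.2.2.2.1 + 1, x.2.2.2.2) :=
    Primrec.pair (Primrec.succ.comp (Primrec.fst.comp hst)) (Primrec.snd.comp hst)
  have hst' : Primrec fun y : Ctx3 × (S × S) => y.1.2.2.2 := hst.comp Primrec.fst
  have hfind : Primrec fun y : Ctx3 × (S × S) =>
      findB y.1.2.1 y.1.2.2.1 y.1.2.2.2.2 y.2 :=
    prim_findB.comp
      (Primrec.pair (Primrec.fst.comp (Primrec.snd.comp Primrec.fst))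
        (Primrec.pair (Primrec.fst.comp (Primrec.snd.comp (Primrec.snd.comp Primrec.fst)))
          (Primrec.pair (Primrec.snd.comp hst') Primrec.snd)))
  have hinner2 : Primrec fun w : (Ctx3 × (S × S)) × List (S × S) =>
      (w.1.1.2.2.2.1 + 1, w.1.1.2.2.2.2 ++ w.2) :=
    Primrec.pair
      (Primrec.succ.comp (Primrec.fst.comp (hst'.comp Primrec.fst)))
      (Primrec.list_append.comp (Primrec.snd.comp (hst'.comp Primrec.fst)) Primrec.snd)
  have hsome : Primrec fun y : Ctx3 × (S × S) =>
      Option.casesOn (motive := fun _ => ℕ × List (S × S))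
        (findB y.1.2.1 y.1.2.2.1 y.1.2.2.2.2 y.2) y.1.2.2.2
        fun β => (y.1.2.2.2.1 + 1, y.1.2.2.2.2 ++ β) :=
    Primrec.option_casesOn hfind hst' (prim2_mk hinner2)
  have hsome2 : Primrec₂ fun (x : Ctx3) (a : S × S) =>
      Option.casesOn (motive := fun _ => ℕ × List (S × S))
        (findB x.2.1 x.2.2.1 x.2.2.2.2 a) x.2.2.2
        fun β => (x.2.2.2.1 + 1, x.2.2.2.2 ++ β) := hsome
  have hfst : Primrec fun x : Ctx3 => x.1 := Primrec.fst
  have := Primrec.option_casesOn hfst hnone hsome2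
  exact this.of_eq fun x => rfl

lemma stepF_none (L : List (S × S)) (s : ℕ) (st : ℕ × List (S × S)) :
    stepF none L s st = (st.1 + 1, st.2) := rfl

lemma stepF_some_none {L : List (S × S)} {s : ℕ} {st : ℕ × List (S × S)} {a : S × S}
    (h : findB L s st.2 a = none) : stepF (some a) L s st = st := by
  have e : stepF (some a) L s st = Option.casesOn (motive := fun _ => ℕ × List (S × S))
      (findB L s st.2 a) st fun β => (st.1 + 1, st.2 ++ β) := rfl
  rw [e, h]

lemma stepF_some_some {L : List (S × S)} {s : ℕ} {st : ℕ × List (S × S)} {a : S × S}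
    {β : List (S × S)} (h : findB L s st.2 a = some β) :
    stepF (some a) L s st = (st.1 + 1, st.2 ++ β) := by
  have e : stepF (some a) L s st = Option.casesOn (motive := fun _ => ℕ × List (S × S))
      (findB L s st.2 a) st fun γ => (st.1 + 1, st.2 ++ γ) := rfl
  rw [e, h]

lemma machine_zero (fA fA' : ℕ → Option (S × S)) :
    machine fA fA' 0 = (0, []) := rfl

lemma machine_succ (fA fA' : ℕ → Option (S × S)) (s : ℕ) :
    machine fA fA' (s + 1) =
      stepF (fA' (machine fA fA' s).1) (enumBy fA s) s (machine fA fA' s) := rfl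

attribute [irreducible] stepF

lemma comp2_mk {τ β σ : Type} [Primcodable τ] [Primcodable β] [Primcodable σ]
    {f : τ → β → σ} (h : Computable fun p : τ × β => f p.1 p.2) : Computable₂ f := h

lemma comp_enumBy {fA : ℕ → Option (S × S)} (hfA : Computable fA) :
    Computable (enumBy fA) := by
  have hstep : Computable fun p : ℕ × (ℕ × List (S × S)) => p.2.2 ++ (fA p.2.1).toList :=
    Computable.list_append.comp (Computable.snd.comp Computable.snd)
      ((Primrec.optionToList.to_comp).comp (hfA.comp (Computable.fst.comp Computable.snd)))
  have hstep2 : Computable₂ fun (_ : ℕ) (q : ℕ × List (S × S)) => q.2 ++ (fA q.1).toList :=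
    hstep
  have := Computable.nat_rec (Computable.id (α := ℕ))
    (Computable.const ([] : List (S × S))) hstep2
  exact this.of_eq fun n => rfl

lemma comp_machine {fA fA' : ℕ → Option (S × S)} (hfA : Computable fA)
    (hfA' : Computable fA') : Computable (machine fA fA') := by
  have hstep0 : Computable fun q : ℕ × (ℕ × (ℕ × List (S × S))) =>
      stepF (fA' q.2.2.1) (enumBy fA q.2.1) q.2.1 q.2.2 :=
    (prim_stepF.to_comp).comp
      (Computable.pair (hfA'.comp (Computable.fst.comp (Computable.snd.comp Computable.snd)))
        (Computable.pair ((comp_enumBy hfA).comp (Computable.fst.comp Computable.snd))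
          (Computable.pair (Computable.fst.comp Computable.snd)
            (Computable.snd.comp Computable.snd))))
  have hstep : Computable₂ fun (_ : ℕ) (p : ℕ × (ℕ × List (S × S))) =>
      stepF (fA' p.2.1) (enumBy fA p.1) p.1 p.2 := hstep0
  have := Computable.nat_rec (Computable.id (α := ℕ))
    (Computable.const ((0 : ℕ), ([] : List (S × S)))) hstep
  exact this.of_eq fun n => rfl

attribute [irreducible] machine

lemma comp_enumF {fA fA' : ℕ → Option (S × S)} (hfA : Computable fA)
    (hfA' : Computable fA') : Computable (enumF fA fA') := by
  unfold enumF
  apply Computable.list_getElem?.comp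
  · exact Computable.snd.comp ((comp_machine hfA hfA').comp
      ((Primrec.fst.comp Primrec.unpair).to_comp))
  · exact (Primrec.snd.comp Primrec.unpair).to_comp


-- === section E : machine semantics ===
def ocyl (o : Option (S × S)) : Set (Seq × Seq) := o.elim ∅ cyl2

section MachineSemantics

variable {fA fA' : ℕ → Option (S × S)} {A : Set (S × S)}

lemma machine_B_mono (fA fA' : ℕ → Option (S × S)) (s : ℕ) :
    ∃ t, (machine fA fA' (s + 1)).2 = (machine fA fA' s).2 ++ t := by
  rw [machine_succ]
  cases hfa : fA' (machine fA fA' s).1 with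
  | none => exact ⟨[], by rw [stepF_none]; simp⟩
  | some a =>
    cases hfb : findB (enumBy fA s) s (machine fA fA' s).2 a with
    | none => exact ⟨[], by rw [stepF_some_none hfb]; simp⟩
    | some β => exact ⟨β, by rw [stepF_some_some hfb]⟩

lemma machine_B_mono' (fA fA' : ℕ → Option (S × S)) {s s' : ℕ} (h : s ≤ s') :
    ∃ t, (machine fA fA' s').2 = (machine fA fA' s).2 ++ t := by
  induction s' with
  | zero =>
    have : s = 0 := Nat.le_zero.mp h
    subst this; exact ⟨[], by simp⟩
  | succ s' ih =>
    rcases Nat.lt_succ_iff_lt_or_eq.mp (Nat.lt_succ_of_le h) with h' | rfl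
    · obtain ⟨t, ht⟩ := ih (Nat.lt_succ_iff.mp h')
      obtain ⟨t', ht'⟩ := machine_B_mono fA fA' s'
      exact ⟨t ++ t', by rw [ht', ht, List.append_assoc]⟩
    · exact ⟨[], by simp⟩

lemma machine_mem_mono {z : S × S} {s s' : ℕ} (h : s ≤ s')
    (hz : z ∈ (machine fA fA' s).2) : z ∈ (machine fA fA' s').2 := by
  obtain ⟨t, ht⟩ := machine_B_mono' fA fA' h
  rw [ht]
  exact List.mem_append_left _ hz

lemma machine_j_mono (fA fA' : ℕ → Option (S × S)) {s s' : ℕ} (h : s ≤ s') :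
    (machine fA fA' s).1 ≤ (machine fA fA' s').1 := by
  induction s' with
  | zero => have : s = 0 := Nat.le_zero.mp h; subst this; exact le_refl _
  | succ s' ih =>
    have step : (machine fA fA' s').1 ≤ (machine fA fA' (s' + 1)).1 := by
      rw [machine_succ]
      cases hfa : fA' (machine fA fA' s').1 with
      | none => rw [stepF_none]; exact Nat.le_succ _
      | some a =>
        cases hfb : findB (enumBy fA s') s' (machine fA fA' s').2 a with
        | none => rw [stepF_some_none hfb]
        | some β => rw [stepF_some_some hfb]; exact Nat.le_succ _
    rcases Nat.lt_succ_iff_lt_or_eq.mp (Nat.lt_succ_of_le h) with h' | rfl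
    · exact le_trans (ih (Nat.lt_succ_iff.mp h')) step
    · exact le_refl _

/-- The main invariant of the machine. -/
lemma machine_good (hAenum : ∀ z : S × S, (∃ n, fA n = some z) → z ∈ A) (s : ℕ) :
    (∀ z ∈ (machine fA fA' s).2, z ∈ A) ∧
      ((machine fA fA' s).2.Pairwise fun p q => cyl2 p ∩ cyl2 q = ∅) ∧
      UL (machine fA fA' s).2 =
        ⋃ (j : ℕ) (_ : j < (machine fA fA' s).1), ocyl (fA' j) := by
  induction s with
  | zero =>
    refine ⟨by simp [machine_zero], by simp [machine_zero], ?_⟩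
    rw [machine_zero]
    simp
  | succ s ih =>
    obtain ⟨ihA, ihpw, ihU⟩ := ih
    rw [machine_succ]
    cases hfa : fA' (machine fA fA' s).1 with
    | none =>
      rw [stepF_none]
      refine ⟨ihA, ihpw, ?_⟩
      show UL (machine fA fA' s).2 = _
      rw [ihU]
      ext ω
      simp only [Set.mem_iUnion]
      constructor
      · rintro ⟨j, hj, h⟩
        exact ⟨j, Nat.lt_succ_of_lt hj, h⟩
      · rintro ⟨j, hj, h⟩
        rcases Nat.lt_succ_iff_lt_or_eq.mp hj with hj | rfl
        · exact ⟨j, hj, h⟩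
        · rw [hfa] at h; simp [ocyl] at h
    | some a =>
      cases hfb : findB (enumBy fA s) s (machine fA fA' s).2 a with
      | none => rw [stepF_some_none hfb]; exact ⟨ihA, ihpw, ihU⟩
      | some β =>
        rw [stepF_some_some hfb]
        obtain ⟨hsub, hchk⟩ := findB_some hfb
        obtain ⟨hβpw, hβU⟩ := chk_iff.mp hchk
        have hβA : ∀ z ∈ β, z ∈ A := by
          intro z hz
          have := subB_iff.mp hsub z hz
          obtain ⟨n, _, hn⟩ := mem_enumBy.mp this
          exact hAenum z ⟨n, hn⟩
        have hcross : ∀ p ∈ (machine fA fA' s).2, ∀ q ∈ β, cyl2 p ∩ cyl2 q = ∅ := by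
          intro p hp q hq
          apply Set.eq_empty_iff_forall_notMem.mpr
          rintro ω ⟨h1, h2⟩
          have hq' : ω ∈ UL β := Set.mem_biUnion hq h2
          rw [hβU] at hq'
          exact hq'.2 (Set.mem_biUnion hp h1)
        refine ⟨?_, ?_, ?_⟩
        · intro z hz
          rcases List.mem_append.mp hz with h | h
          · exact ihA z h
          · exact hβA z h
        · exact List.pairwise_append.mpr ⟨ihpw, hβpw, hcross⟩
        · show UL ((machine fA fA' s).2 ++ β) = _
          rw [UL_append, hβU, ← Set.diff_eq, Set.union_diff_self, ihU]
          ext ω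
          simp only [Set.mem_union, Set.mem_iUnion]
          constructor
          · rintro (⟨j, hj, h⟩ | h)
            · exact ⟨j, Nat.lt_succ_of_lt hj, h⟩
            · exact ⟨(machine fA fA' s).1, Nat.lt_succ_self _, by rw [hfa]; exact h⟩
          · rintro ⟨j, hj, h⟩
            rcases Nat.lt_succ_iff_lt_or_eq.mp hj with hj | rfl
            · exact Or.inl ⟨j, hj, h⟩
            · right
              rw [hfa] at h
              exact h

lemma exists_enum_bound {β : List (S × S)} (h : ∀ z ∈ β, ∃ n, fA n = some z) :
    ∃ N, ∀ z ∈ β, ∃ n < N, fA n = some z := by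
  induction β with
  | nil => exact ⟨0, by simp⟩
  | cons z rest ih =>
    obtain ⟨N, hN⟩ := ih (fun w hw => h w (List.mem_cons_of_mem z hw))
    obtain ⟨n, hn⟩ := h z (List.mem_cons_self)
    refine ⟨max N (n + 1), ?_⟩
    intro w hw
    rcases List.mem_cons.mp hw with rfl | hw
    · exact ⟨n, lt_of_lt_of_le (Nat.lt_succ_self n) (le_max_right _ _), hn⟩
    · obtain ⟨m, hm, hm'⟩ := hN w hw
      exact ⟨m, lt_of_lt_of_le hm (le_max_left _ _), hm'⟩

/-- Progress: the head counter is unbounded. -/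
lemma machine_progress (h5 : Cond5 A)
    (hAenum : ∀ z : S × S, (∃ n, fA n = some z) → z ∈ A)
    (hAenum' : ∀ z ∈ A, ∃ n, fA n = some z)
    (hA'sub : ∀ j a, fA' j = some a → a ∈ A) :
    ∀ n : ℕ, ∃ s, n < (machine fA fA' s).1 := by
  have key : ∀ s : ℕ, ∃ s' ≥ s, (machine fA fA' s).1 < (machine fA fA' s').1 := by
    intro s
    by_contra hcon
    push_neg at hcon
    set J := (machine fA fA' s).1 with hJ
    have hconst : ∀ s' ≥ s, (machine fA fA' s').1 = J := by
      intro s' hs'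
      exact le_antisymm (hcon s' hs') (machine_j_mono fA fA' hs')
    -- fA' J must be some a and findB fails forever; B is constant
    have hBconst : ∀ s' ≥ s, (machine fA fA' s').2 = (machine fA fA' s).2 := by
      intro s' hs'
      induction s' with
      | zero =>
        have : s = 0 := Nat.le_zero.mp hs'
        rw [this]
      | succ s' ih =>
        rcases Nat.lt_succ_iff_lt_or_eq.mp (Nat.lt_succ_of_le hs') with h' | rfl
        · have hs'' : s ≤ s' := Nat.lt_succ_iff.mp h'
          have ihB := ih hs''
          have hj1 : (machine fA fA' s').1 = J := hconst s' hs''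
          have hj2 : (machine fA fA' (s' + 1)).1 = J := hconst (s' + 1) (le_trans hs'' (Nat.le_succ _))
          rw [machine_succ] at hj2 ⊢
          cases hfa : fA' (machine fA fA' s').1 with
          | none =>
            rw [hfa, stepF_none] at hj2
            rw [hj1] at hj2
            omega
          | some a =>
            cases hfb : findB (enumBy fA s') s' (machine fA fA' s').2 a with
            | none => rw [stepF_some_none hfb]; exact ihB
            | some β =>
              rw [hfa, stepF_some_some hfb] at hj2
              rw [hj1] at hj2
              omega
        · rfl
    cases hfa : fA' J with
    | none =>
      have hj2 : (machine fA fA' (s + 1)).1 = J := hconst (s + 1) (Nat.le_succ _)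
      rw [machine_succ, ← hJ, hfa, stepF_none] at hj2
      omega
    | some a =>
      have haA : a ∈ A := hA'sub J a hfa
      have hgood := machine_good (fA' := fA') hAenum s
      obtain ⟨β, hβA, hβpw, hβU⟩ := exists_beta h5 haA (machine fA fA' s).2 hgood.1
      have hchk : chk β (machine fA fA' s).2 a = true := chk_iff.mpr ⟨hβpw, hβU⟩
      obtain ⟨N, hN⟩ := exists_enum_bound (fun z hz => hAenum' z (hβA z hz))
      set c := Encodable.encode β with hc
      set s' := max (s + 1) (max (c + 1) N) with hs'
      have hss' : s ≤ s' := le_trans (Nat.le_succ s) (le_max_left _ _)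
      have hBs' : (machine fA fA' s').2 = (machine fA fA' s).2 := hBconst s' hss'
      have hsubB : subB β (enumBy fA s') = true := by
        rw [subB_iff]
        intro z hz
        obtain ⟨n, hn, hn'⟩ := hN z hz
        exact mem_enumBy.mpr ⟨n, lt_of_lt_of_le hn
          (le_trans (le_max_right (c + 1) N) (le_max_right _ _)), hn'⟩
      have hcs' : c < s' := lt_of_lt_of_le (Nat.lt_succ_self c)
        (le_trans (le_max_left (c + 1) N) (le_max_right _ _))
      have hfind : (findB (enumBy fA s') s' (machine fA fA' s').2 a).isSome := by
        rw [hBs']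
        exact findB_isSome_of c hcs' (Encodable.encodek β) hsubB hchk
      obtain ⟨β', hβ'⟩ := Option.isSome_iff_exists.mp hfind
      have hj1 : (machine fA fA' s').1 = J := hconst s' hss'
      have hj2 : (machine fA fA' (s' + 1)).1 = J := hconst (s' + 1) (le_trans hss' (Nat.le_succ _))
      rw [machine_succ, hj1, hfa, stepF_some_some hβ'] at hj2
      rw [hj1] at hj2
      omega
  intro n
  induction n with
  | zero =>
    obtain ⟨s', _, h⟩ := key 0
    exact ⟨s', lt_of_le_of_lt (Nat.zero_le _) h⟩
  | succ n ih =>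
    obtain ⟨s, hs⟩ := ih
    obtain ⟨s', _, h⟩ := key s
    exact ⟨s', by omega⟩

end MachineSemantics


/-- Lemma 1: if A ⊆ S² is r.e. and satisfies condition (5), then for every
r.e. A' ⊆ A there is a non-overlapping r.e. A'' ⊆ A with the same cylinder union. -/
theorem nonoverlap_refinement (A : Set (S × S)) (hA : RESet A) (h5 : Cond5 A)
    (A' : Set (S × S)) (hsub : A' ⊆ A) (hA' : RESet A') :
    ∃ A'' : Set (S × S), A'' ⊆ A ∧ RESet A'' ∧ NonOverlapF A'' ∧
      (⋃ x ∈ A'', cyl2 x) = ⋃ x ∈ A', cyl2 x := by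
  obtain ⟨fA, hfAc, hAeq⟩ := hA
  obtain ⟨fA', hfA'c, hA'eq⟩ := hA'
  have hAenum : ∀ z : S × S, (∃ n, fA n = some z) → z ∈ A := fun z hz => by
    rw [hAeq]; exact hz
  have hAenum' : ∀ z ∈ A, ∃ n, fA n = some z := fun z hz => by
    rw [hAeq] at hz; exact hz
  have hA'sub : ∀ j a, fA' j = some a → a ∈ A := fun j a h =>
    hsub (by rw [hA'eq]; exact ⟨j, h⟩)
  have hmem : ∀ z : S × S, (∃ m, enumF fA fA' m = some z) ↔
      ∃ s, z ∈ (machine fA fA' s).2 := by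
    intro z
    constructor
    · rintro ⟨m, hm⟩
      unfold enumF at hm
      exact ⟨m.unpair.1, List.mem_of_getElem? hm⟩
    · rintro ⟨s, hs⟩
      obtain ⟨n, hn⟩ := List.mem_iff_getElem?.mp hs
      refine ⟨Nat.pair s n, ?_⟩
      unfold enumF
      rw [Nat.unpair_pair]
      exact hn
  refine ⟨{z | ∃ m, enumF fA fA' m = some z}, ?_,
    ⟨enumF fA fA', comp_enumF hfAc hfA'c, rfl⟩, ?_, ?_⟩
  · -- A'' ⊆ A
    intro z hz
    obtain ⟨s, hs⟩ := (hmem z).mp hz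
    exact (machine_good (fA' := fA') hAenum s).1 z hs
  · -- non-overlapping
    intro x hx y hy hne
    obtain ⟨sx, hsx⟩ := (hmem x).mp hx
    obtain ⟨sy, hsy⟩ := (hmem y).mp hy
    have hx' : x ∈ (machine fA fA' (max sx sy)).2 := machine_mem_mono (le_max_left _ _) hsx
    have hy' : y ∈ (machine fA fA' (max sx sy)).2 := machine_mem_mono (le_max_right _ _) hsy
    have hpw := (machine_good (fA' := fA') hAenum (max sx sy)).2.1
    haveI : Std.Symm (fun p q : S × S => cyl2 p ∩ cyl2 q = ∅) :=
      ⟨fun p q h => by rw [Set.inter_comm]; exact h⟩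
    exact hpw.forall hx' hy' hne
  · -- equal unions
    ext ω
    simp only [Set.mem_iUnion, Set.mem_setOf_eq]
    constructor
    · rintro ⟨z, ⟨hz, hω⟩⟩
      obtain ⟨s, hs⟩ := (hmem z).mp hz
      have hU := (machine_good (fA' := fA') hAenum s).2.2
      have : ω ∈ UL (machine fA fA' s).2 := Set.mem_biUnion hs hω
      rw [hU] at this
      simp only [Set.mem_iUnion] at this
      obtain ⟨j, _, hj⟩ := this
      cases hfa : fA' j with
      | none => rw [hfa] at hj; simp [ocyl] at hj
      | some a =>
        rw [hfa] at hj
        refine ⟨a, ?_, hj⟩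
        rw [hA'eq]
        exact ⟨j, hfa⟩
    · rintro ⟨x, ⟨hx, hω⟩⟩
      rw [hA'eq] at hx
      obtain ⟨jj, hjj⟩ := hx
      obtain ⟨s, hjs⟩ := machine_progress h5 hAenum hAenum' hA'sub jj
      have hU := (machine_good (fA' := fA') hAenum s).2.2
      have hmemU : ω ∈ UL (machine fA fA' s).2 := by
        rw [hU]
        simp only [Set.mem_iUnion]
        exact ⟨jj, hjs, by rw [hjj]; exact hω⟩
      simp only [UL, Set.mem_iUnion] at hmemU
      obtain ⟨z, hzmem, hzω⟩ := hmemU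
      exact ⟨z, (hmem z).mpr ⟨s, hzmem⟩, hzω⟩



end AlgRand
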